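/- Let f be a finite signed Radon measure supported in a bounded open set ω ⊂ ℝ² with f(ω) ≥ 0. Then there exists a positive Radon measure g with 0 ≤ g ≤ f₊ such that for every Lipschitz function ξ on ω, ∫ ξ d(f−g) ≤ 2·diam(ω)·‖∇ξ‖_{L∞(ω)}·f₋(ω). -/

import Mathlib

open MeasureTheory Metric

/-- mass displacement lemma (easy version). -/
theorem stmt0
    (ω : Set (EuclideanSpace ℝ (Fin 2))) (hω : IsOpen ω) (hb : Bornology.IsBounded ω)
    (f : SignedMeasure (EuclideanSpace ℝ (Fin 2)))
    (hsupp : ∀ s : Set (EuclideanSpace ℝ (Fin 2)), MeasurableSet s → s ∩ ω = ∅ → f s = 0)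
    (hf : 0 ≤ f ω) :
    ∃ g : Measure (EuclideanSpace ℝ (Fin 2)),
      g ≤ f.toJordanDecomposition.posPart ∧
      ∀ (ξ : EuclideanSpace ℝ (Fin 2) → ℝ) (K : NNReal), LipschitzOnWith K ξ ω →
        (∫ x in ω, ξ x ∂f.toJordanDecomposition.posPart)
          - (∫ x in ω, ξ x ∂f.toJordanDecomposition.negPart)
          - (∫ x in ω, ξ x ∂g)
        ≤ 2 * diam ω * (K : ℝ) * (f.toJordanDecomposition.negPart ω).toReal := by
  classical
  set μ := f.toJordanDecomposition.posPart with hμdef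
  set ν := f.toJordanDecomposition.negPart with hνdef
  have hωm : MeasurableSet ω := hω.measurableSet
  have hμfin : μ ω ≠ ⊤ := measure_ne_top μ ω
  have hνfin : ν ω ≠ ⊤ := measure_ne_top ν ω
  -- f ω = (μ ω).toReal - (ν ω).toReal
  have hfω : f ω = (μ ω).toReal - (ν ω).toReal := by
    conv_lhs => rw [← f.toSignedMeasure_toJordanDecomposition]
    rw [JordanDecomposition.toSignedMeasure, VectorMeasure.sub_apply,
      Measure.toSignedMeasure_apply_measurable hωm,
      Measure.toSignedMeasure_apply_measurable hωm]
    rfl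
  have hνμR : (ν ω).toReal ≤ (μ ω).toReal := by
    rw [hfω] at hf; linarith
  have hνμ : ν ω ≤ μ ω := (ENNReal.toReal_le_toReal hνfin hμfin).mp hνμR
  set c : ENNReal := 1 - ν ω / μ ω with hc
  have hdivle : ν ω / μ ω ≤ 1 := by
    rcases eq_or_ne (μ ω) 0 with h0 | h0
    · have : ν ω = 0 := le_antisymm (h0 ▸ hνμ) zero_le
      simp [this]
    · exact ENNReal.div_le_of_le_mul (by simpa using hνμ)
  refine ⟨c • μ, ?_, ?_⟩
  · -- c • μ ≤ μ
    intro s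
    have : c ≤ 1 := tsub_le_self
    calc (c • μ) s = c * μ s := rfl
      _ ≤ 1 * μ s := mul_le_mul_left this _
      _ = μ s := one_mul _
  intro ξ K hξ
  obtain ⟨ξ', hξ'lip, hξ'eq⟩ := hξ.extend_real
  have hdiam0 : 0 ≤ diam ω := diam_nonneg
  have hK0 : (0:ℝ) ≤ K := K.coe_nonneg
  -- replace integrals of ξ by integrals of ξ'
  have hcongμ : ∫ x in ω, ξ x ∂μ = ∫ x in ω, ξ' x ∂μ :=
    setIntegral_congr_fun hωm fun x hx => hξ'eq hx
  have hcongν : ∫ x in ω, ξ x ∂ν = ∫ x in ω, ξ' x ∂ν :=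
    setIntegral_congr_fun hωm fun x hx => hξ'eq hx
  have hcongg : ∫ x in ω, ξ x ∂(c • μ) = ∫ x in ω, ξ' x ∂(c • μ) :=
    setIntegral_congr_fun hωm fun x hx => hξ'eq hx
  rw [hcongμ, hcongν, hcongg]
  -- integral wrt c • μ
  have hcreal : c.toReal = 1 - (ν ω).toReal / (μ ω).toReal := by
    rw [hc, ENNReal.toReal_sub_of_le hdivle ENNReal.one_ne_top, ENNReal.toReal_one,
      ENNReal.toReal_div]
  have hg_int : ∫ x in ω, ξ' x ∂(c • μ)
      = (1 - (ν ω).toReal / (μ ω).toReal) * ∫ x in ω, ξ' x ∂μ := by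
    rw [Measure.restrict_smul, integral_smul_measure, hcreal, smul_eq_mul]
  rw [hg_int]
  set a := (μ ω).toReal with ha
  set b := (ν ω).toReal with hbdef
  have ha0 : 0 ≤ a := ENNReal.toReal_nonneg
  have hb0 : 0 ≤ b := ENNReal.toReal_nonneg
  rcases eq_or_ne (μ ω) 0 with hμ0 | hμ0
  · -- degenerate case: everything vanishes
    have hν0 : ν ω = 0 := le_antisymm (hμ0 ▸ hνμ) zero_le
    have hrμ : μ.restrict ω = 0 := Measure.restrict_eq_zero.2 hμ0
    have hrν : ν.restrict ω = 0 := Measure.restrict_eq_zero.2 hν0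
    rw [show (∫ x in ω, ξ' x ∂μ) = 0 by rw [hrμ, integral_zero_measure],
      show (∫ x in ω, ξ' x ∂ν) = 0 by rw [hrν, integral_zero_measure]]
    simp [hbdef, hν0]
  -- main case
  have haa : a ≠ 0 := by
    simpa [ha, ENNReal.toReal_eq_zero_iff, hμfin] using hμ0
  have hapos : 0 < a := lt_of_le_of_ne ha0 (Ne.symm haa)
  -- ω is nonempty (μ ω ≠ 0)
  have hωne : ω.Nonempty := by
    by_contra h
    rw [Set.not_nonempty_iff_eq_empty] at h
    exact hμ0 (by simp [h])
  obtain ⟨x₀, hx₀⟩ := hωne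
  set t := ξ' x₀ with ht
  -- integrability of ξ' and constants on ω
  have hcont : Continuous ξ' := hξ'lip.continuous
  have hcompact : IsCompact (closure ω) := hb.isCompact_closure
  have hint : ∀ (m : Measure (EuclideanSpace ℝ (Fin 2))) [IsFiniteMeasure m],
      IntegrableOn ξ' ω m := by
    intro m _
    exact (hcont.continuousOn.integrableOn_compact hcompact).mono_set subset_closure
  have hintμ : IntegrableOn ξ' ω μ := hint μ
  have hintν : IntegrableOn ξ' ω ν := hint ν
  -- pointwise bound on ξ' - t over ω
  have hbound : ∀ x ∈ ω, ‖ξ' x - t‖ ≤ (K : ℝ) * diam ω := by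
    intro x hx
    have := hξ'lip.dist_le_mul x x₀
    have hd : dist x x₀ ≤ diam ω := dist_le_diam_of_mem hb hx hx₀
    calc ‖ξ' x - t‖ = dist (ξ' x) (ξ' x₀) := by rw [Real.dist_eq, Real.norm_eq_abs, ht]
      _ ≤ K * dist x x₀ := hξ'lip.dist_le_mul x x₀
      _ ≤ K * diam ω := by nlinarith
  have hboundI : ∀ (m : Measure (EuclideanSpace ℝ (Fin 2))) [IsFiniteMeasure m],
      ‖∫ x in ω, (ξ' x - t) ∂m‖ ≤ (K : ℝ) * diam ω * (m ω).toReal := by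
    intro m _
    have : ∀ᵐ x ∂m.restrict ω, ‖ξ' x - t‖ ≤ (K : ℝ) * diam ω :=
      (ae_restrict_iff' hωm).2 (Filter.Eventually.of_forall hbound)
    calc ‖∫ x in ω, (ξ' x - t) ∂m‖ ≤ (K : ℝ) * diam ω * ((m.restrict ω) Set.univ).toReal :=
        norm_integral_le_of_norm_le_const this
      _ = (K : ℝ) * diam ω * (m ω).toReal := by
          rw [Measure.restrict_apply_univ]
  have hIμ : ‖∫ x in ω, (ξ' x - t) ∂μ‖ ≤ (K : ℝ) * diam ω * a := hboundI μ
  have hIν : ‖∫ x in ω, (ξ' x - t) ∂ν‖ ≤ (K : ℝ) * diam ω * b := hboundI ν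
  -- decompose integrals
  have hdecμ : ∫ x in ω, ξ' x ∂μ = (∫ x in ω, (ξ' x - t) ∂μ) + t * a := by
    rw [integral_sub hintμ (integrableOn_const (measure_ne_top _ _) enorm_ne_top),
      setIntegral_const, smul_eq_mul, Measure.real, ← ha]
    ring
  have hdecν : ∫ x in ω, ξ' x ∂ν = (∫ x in ω, (ξ' x - t) ∂ν) + t * b := by
    rw [integral_sub hintν (integrableOn_const (measure_ne_top _ _) enorm_ne_top),
      setIntegral_const, smul_eq_mul, Measure.real, ← hbdef]
    ring
  set Iμ := ∫ x in ω, (ξ' x - t) ∂μ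
  set Iν := ∫ x in ω, (ξ' x - t) ∂ν
  have hIμ' : Iμ ≤ (K : ℝ) * diam ω * a := le_trans (le_abs_self _) hIμ
  have hIν' : -Iν ≤ (K : ℝ) * diam ω * b := le_trans (neg_le_abs _) hIν
  rw [hdecμ, hdecν]
  have hba : 0 ≤ b / a := div_nonneg hb0 ha0
  have hbale : b / a ≤ 1 := (div_le_one hapos).2 hνμR
  -- LHS = (b/a) * (Iμ + t a) - (Iν + t b) = (b/a) Iμ - Iν
  have key : (Iμ + t * a) - (Iν + t * b) - (1 - b / a) * (Iμ + t * a)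
      = (b / a) * Iμ - Iν := by
    field_simp
    ring
  rw [key]
  have h1 : (b / a) * Iμ ≤ (b / a) * ((K : ℝ) * diam ω * a) :=
    mul_le_mul_of_nonneg_left hIμ' hba
  have h2 : (b / a) * ((K : ℝ) * diam ω * a) = (K : ℝ) * diam ω * b := by
    field_simp
  nlinarith [h1, h2, hIν']
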